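/- Let (M, τ, h) be a Galilei manifold, v a unit timelike vector field, and ∇̊ the special Galilei connection with coefficients Γ̊^ρ_{μν} = v^ρ ∂_μ τ_ν + (1/2) h^{ρσ}(∂_μ h_{νσ} + ∂_ν h_{μσ} − ∂_σ h_{μν}). Then ∇̊ h = 0, i.e. ∇̊_μ h^{ρσ} = ∂_μ h^{ρσ} + Γ̊^ρ_{μλ} h^{λσ} + Γ̊^σ_{μλ} h^{ρλ} = 0. -/

import Mathlib

/-- Partial derivative `∂_μ f` of a function on `ℝ^N` (coordinate chart). -/
noncomputable def pd {N : ℕ} (μ : Fin N) (f : (Fin N → ℝ) → ℝ) (x : Fin N → ℝ) : ℝ :=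
  fderiv ℝ f x (Pi.single μ 1)

/-- Covariant derivative `∇_μ τ_ν = ∂_μ τ_ν − Γ^λ_{μν} τ_λ` of a one-form, in coordinates. -/
noncomputable def covTau {N : ℕ} (Γ : (Fin N → ℝ) → Fin N → Fin N → Fin N → ℝ)
    (τ : (Fin N → ℝ) → Fin N → ℝ) (x : Fin N → ℝ) (μ ν : Fin N) : ℝ :=
  pd μ (fun y => τ y ν) x - ∑ l, Γ x l μ ν * τ x l

/-- Covariant derivative `∇_ρ v^κ = ∂_ρ v^κ + Γ^κ_{ρλ} v^λ` of a vector field. -/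
noncomputable def covVec {N : ℕ} (Γ : (Fin N → ℝ) → Fin N → Fin N → Fin N → ℝ)
    (v : (Fin N → ℝ) → Fin N → ℝ) (x : Fin N → ℝ) (ρ κ : Fin N) : ℝ :=
  pd ρ (fun y => v y κ) x + ∑ l, Γ x κ ρ l * v x l

/-- Covariant derivative `∇_ρ h^{μν}` of a contravariant 2-tensor. -/
noncomputable def covHup {N : ℕ} (Γ : (Fin N → ℝ) → Fin N → Fin N → Fin N → ℝ)
    (h : (Fin N → ℝ) → Fin N → Fin N → ℝ) (x : Fin N → ℝ) (ρ μ ν : Fin N) : ℝ :=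
  pd ρ (fun y => h y μ ν) x + (∑ l, Γ x μ ρ l * h x l ν) + ∑ l, Γ x ν ρ l * h x μ l

/-- Covariant derivative `∇_ρ h_{μν}` of a covariant 2-tensor. -/
noncomputable def covHdown {N : ℕ} (Γ : (Fin N → ℝ) → Fin N → Fin N → Fin N → ℝ)
    (hc : (Fin N → ℝ) → Fin N → Fin N → ℝ) (x : Fin N → ℝ) (ρ μ ν : Fin N) : ℝ :=
  pd ρ (fun y => hc y μ ν) x - (∑ l, Γ x l ρ μ * hc x l ν) - ∑ l, Γ x l ρ ν * hc x μ l

/-- Coefficients of the special Galilei connection determined by a unit timelike vector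
field `v`: `Γ̊^ρ_{μν} = v^ρ ∂_μ τ_ν + ½ h^{ρσ}(∂_μ h_{νσ} + ∂_ν h_{μσ} − ∂_σ h_{μν})`. -/
noncomputable def specialGamma {N : ℕ}
    (τ : (Fin N → ℝ) → Fin N → ℝ) (h hc : (Fin N → ℝ) → Fin N → Fin N → ℝ)
    (v : (Fin N → ℝ) → Fin N → ℝ) (x : Fin N → ℝ) (ρ μ ν : Fin N) : ℝ :=
  v x ρ * pd μ (fun y => τ y ν) x +
    (1 / 2) * ∑ σ, h x ρ σ *
      (pd μ (fun y => hc y ν σ) x + pd ν (fun y => hc y μ σ) x - pd σ (fun y => hc y μ ν) x)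

private lemma pd_of_sum_mul {N : ℕ} (m : Fin N) (f g : Fin N → (Fin N → ℝ) → ℝ)
    (x : Fin N → ℝ)
    (hf : ∀ i, DifferentiableAt ℝ (f i) x) (hg : ∀ i, DifferentiableAt ℝ (g i) x) :
    pd m (fun y => ∑ i, f i y * g i y) x
      = ∑ i, (pd m (f i) x * g i x + f i x * pd m (g i) x) := by
  unfold pd
  rw [fderiv_fun_sum (A := fun i y => f i y * g i y) (fun i _ => (hf i).mul (hg i))]
  rw [ContinuousLinearMap.sum_apply]
  refine Finset.sum_congr rfl fun i _ => ?_
  rw [fderiv_fun_mul (hf i) (hg i)]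
  simp only [ContinuousLinearMap.add_apply, ContinuousLinearMap.smul_apply, smul_eq_mul]
  ring

private lemma pd_const_sub_mul {N : ℕ} (m : Fin N) (c : ℝ) (f g : (Fin N → ℝ) → ℝ)
    (x : Fin N → ℝ)
    (hf : DifferentiableAt ℝ f x) (hg : DifferentiableAt ℝ g x) :
    pd m (fun y => c - f y * g y) x = -(pd m f x * g x + f x * pd m g x) := by
  unfold pd
  rw [fderiv_const_sub, fderiv_fun_mul hf hg]
  simp only [ContinuousLinearMap.neg_apply, ContinuousLinearMap.add_apply,
    ContinuousLinearMap.smul_apply, smul_eq_mul]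
  ring

private lemma key_algebra {N : ℕ} (H HC : Fin N → Fin N → ℝ) (T V DT DV : Fin N → ℝ)
    (DH : Fin N → Fin N → ℝ) (DHC : Fin N → Fin N → Fin N → ℝ) (μ ρ σ : Fin N)
    (Hsymm : ∀ a b, H a b = H b a)
    (HCsymm : ∀ a b, HC a b = HC b a)
    (DHsymm : ∀ a b, DH a b = DH b a)
    (DHCsymm : ∀ a b, DHC μ a b = DHC μ b a)
    (hA : ∀ s, ∑ l, DT l * H l s = -∑ l, T l * DH l s)
    (hB : ∀ a s, ∑ l, DHC μ a l * H l s = -(DT a * V s + T a * DV s) - ∑ l, HC a l * DH l s)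
    (hTH : ∀ s, ∑ a, T a * H a s = 0)
    (hP : ∀ a s, ∑ k, HC a k * H k s = (if a = s then 1 else 0) - T a * V s) :
    DH ρ σ
      + (∑ l, (V ρ * DT l + 1 / 2 * ∑ a, H ρ a * (DHC μ l a + DHC l μ a - DHC a μ l)) * H l σ)
      + (∑ l, (V σ * DT l + 1 / 2 * ∑ a, H σ a * (DHC μ l a + DHC l μ a - DHC a μ l)) * H ρ l)
      = 0 := by
  classical
  -- delta identity
  have hδ : ∀ p q : Fin N, (∑ l, ((if l = p then (1:ℝ) else 0) - T l * V p) * DH l q)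
      = DH p q - V p * ∑ l, T l * DH l q := by
    intro p q
    have h1 : (∑ l, ((if l = p then (1:ℝ) else 0) - T l * V p) * DH l q)
        = (∑ l, (if l = p then DH l q else 0)) - ∑ l, V p * (T l * DH l q) := by
      rw [← Finset.sum_sub_distrib]
      refine Finset.sum_congr rfl fun l _ => ?_
      by_cases hl : l = p <;> simp [hl] <;> ring
    rw [h1, Finset.sum_ite_eq' Finset.univ p (fun l => DH l q), ← Finset.mul_sum]
    simp
  -- the S-term
  have hS : ∀ p q : Fin N, (∑ l, ∑ a, H p a * DHC μ l a * H l q)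
      = V q * (∑ a, T a * DH a p) - DH p q + V p * (∑ l, T l * DH l q) := by
    intro p q
    rw [Finset.sum_comm]
    have h1 : (∑ a, ∑ l, H p a * DHC μ l a * H l q)
        = ∑ a, H p a * (-(DT a * V q + T a * DV q) - ∑ l, HC a l * DH l q) := by
      refine Finset.sum_congr rfl fun a _ => ?_
      rw [← hB a q, Finset.mul_sum]
      refine Finset.sum_congr rfl fun l _ => ?_
      rw [DHCsymm a l]
      ring
    rw [h1]
    have h2 : (∑ a, H p a * (-(DT a * V q + T a * DV q) - ∑ l, HC a l * DH l q))
        = (∑ a, -(V q * (DT a * H a p)))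
          + ((∑ a, -(DV q * (T a * H a p))) + ∑ a, ∑ l, -(H p a * (HC a l * DH l q))) := by
      rw [← Finset.sum_add_distrib, ← Finset.sum_add_distrib]
      refine Finset.sum_congr rfl fun a _ => ?_
      rw [Finset.sum_neg_distrib, ← Finset.mul_sum, Hsymm p a]
      ring
    rw [h2]
    have h3 : (∑ a, -(V q * (DT a * H a p))) = V q * ∑ a, T a * DH a p := by
      rw [Finset.sum_neg_distrib, ← Finset.mul_sum, hA p]
      ring
    have h4 : (∑ a, -(DV q * (T a * H a p))) = 0 := by
      rw [Finset.sum_neg_distrib, ← Finset.mul_sum, hTH p]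
      ring
    have h5 : (∑ a, ∑ l, -(H p a * (HC a l * DH l q)))
        = -(DH p q - V p * ∑ l, T l * DH l q) := by
      rw [Finset.sum_comm]
      have e : ∀ l, (∑ a, -(H p a * (HC a l * DH l q)))
          = -(((if l = p then (1:ℝ) else 0) - T l * V p) * DH l q) := by
        intro l
        rw [Finset.sum_neg_distrib]
        congr 1
        rw [← hP l p, Finset.sum_mul]
        refine Finset.sum_congr rfl fun a _ => ?_
        rw [HCsymm a l, Hsymm p a]
        ring
      calc (∑ l, ∑ a, -(H p a * (HC a l * DH l q)))
          = ∑ l, -(((if l = p then (1:ℝ) else 0) - T l * V p) * DH l q) :=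
            Finset.sum_congr rfl fun l _ => e l
        _ = -∑ l, (((if l = p then (1:ℝ) else 0) - T l * V p) * DH l q) :=
            Finset.sum_neg_distrib _
        _ = _ := by rw [hδ p q]
    rw [h3, h4, h5]
    ring
  -- the antisymmetric part cancels
  have hR : (∑ l, ∑ a, H ρ a * ((DHC l μ a - DHC a μ l) * H l σ))
      + (∑ l, ∑ a, H σ a * ((DHC l μ a - DHC a μ l) * H l ρ)) = 0 := by
    have h2 : (∑ l, ∑ a, H σ a * ((DHC l μ a - DHC a μ l) * H l ρ))
        = -∑ l, ∑ a, H ρ a * ((DHC l μ a - DHC a μ l) * H l σ) := by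
      calc (∑ l, ∑ a, H σ a * ((DHC l μ a - DHC a μ l) * H l ρ))
          = ∑ a, ∑ l, H σ a * ((DHC l μ a - DHC a μ l) * H l ρ) := Finset.sum_comm
        _ = ∑ x, ∑ y, -(H ρ y * ((DHC x μ y - DHC y μ x) * H x σ)) := by
            refine Finset.sum_congr rfl fun x _ => Finset.sum_congr rfl fun y _ => ?_
            rw [Hsymm σ x, Hsymm y ρ]
            ring
        _ = -∑ l, ∑ a, H ρ a * ((DHC l μ a - DHC a μ l) * H l σ) := by
            simp only [Finset.sum_neg_distrib]
    rw [h2]; ring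
  -- decompose the Γ-sums
  have g : ∀ p q : Fin N,
      (∑ l, (V p * DT l + 1 / 2 * ∑ a, H p a * (DHC μ l a + DHC l μ a - DHC a μ l)) * H l q)
        = V p * (∑ l, DT l * H l q)
          + 1 / 2 * ((∑ l, ∑ a, H p a * DHC μ l a * H l q)
            + ∑ l, ∑ a, H p a * ((DHC l μ a - DHC a μ l) * H l q)) := by
    intro p q
    have key : ∀ l, ((∑ a, H p a * (DHC μ l a + DHC l μ a - DHC a μ l)) * H l q)
        = (∑ a, H p a * DHC μ l a * H l q)
          + ∑ a, H p a * ((DHC l μ a - DHC a μ l) * H l q) := by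
      intro l
      rw [Finset.sum_mul, ← Finset.sum_add_distrib]
      exact Finset.sum_congr rfl fun a _ => by ring
    calc (∑ l, (V p * DT l + 1 / 2 * ∑ a, H p a * (DHC μ l a + DHC l μ a - DHC a μ l)) * H l q)
        = ∑ l, (V p * (DT l * H l q)
            + (1 / 2 * (∑ a, H p a * DHC μ l a * H l q)
              + 1 / 2 * ∑ a, H p a * ((DHC l μ a - DHC a μ l) * H l q))) := by
          refine Finset.sum_congr rfl fun l _ => ?_
          have := key l
          linear_combination (1/2 : ℝ) * this
      _ = (∑ l, V p * (DT l * H l q))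
            + ((∑ l, 1 / 2 * (∑ a, H p a * DHC μ l a * H l q))
              + ∑ l, 1 / 2 * ∑ a, H p a * ((DHC l μ a - DHC a μ l) * H l q)) := by
          rw [← Finset.sum_add_distrib, ← Finset.sum_add_distrib]
      _ = V p * (∑ l, DT l * H l q)
          + 1 / 2 * ((∑ l, ∑ a, H p a * DHC μ l a * H l q)
            + ∑ l, ∑ a, H p a * ((DHC l μ a - DHC a μ l) * H l q)) := by
          rw [← Finset.mul_sum, ← Finset.mul_sum, ← Finset.mul_sum]
          ring
  -- rewrite second Γ-sum so that the H factor has the summation index first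
  have hflip : (∑ l, (V σ * DT l + 1 / 2 * ∑ a, H σ a * (DHC μ l a + DHC l μ a - DHC a μ l)) * H ρ l)
      = ∑ l, (V σ * DT l + 1 / 2 * ∑ a, H σ a * (DHC μ l a + DHC l μ a - DHC a μ l)) * H l ρ :=
    Finset.sum_congr rfl fun l _ => by rw [Hsymm ρ l]
  rw [hflip, g ρ σ, g σ ρ]
  have s1 := hS ρ σ
  have s2 := hS σ ρ
  have a1 := hA σ
  have a2 := hA ρ
  have hd : DH σ ρ = DH ρ σ := DHsymm σ ρ
  linear_combination s1 * (1/2 : ℝ) + s2 * (1/2 : ℝ) + hR * (1/2 : ℝ)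
    + a1 * V ρ + a2 * V σ - hd * (1/2 : ℝ)

/-- On a Galilei manifold with unit timelike vector field `v`, the special
Galilei connection `Γ̊` satisfies `∇̊h = 0`, i.e.
`∂_μ h^{ρσ} + Γ̊^ρ_{μλ} h^{λσ} + Γ̊^σ_{μλ} h^{ρλ} = 0` (in local coordinates). -/
theorem special_connection_space_metric_parallel (n : ℕ)
    (τ : (Fin (n + 1) → ℝ) → Fin (n + 1) → ℝ)
    (h hc : (Fin (n + 1) → ℝ) → Fin (n + 1) → Fin (n + 1) → ℝ)
    (v : (Fin (n + 1) → ℝ) → Fin (n + 1) → ℝ)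
    (hτsm : ∀ ν, ContDiff ℝ (⊤ : ℕ∞) fun x => τ x ν)
    (hhsm : ∀ μ ν, ContDiff ℝ (⊤ : ℕ∞) fun x => h x μ ν)
    (hhcsm : ∀ μ ν, ContDiff ℝ (⊤ : ℕ∞) fun x => hc x μ ν)
    (hvsm : ∀ μ, ContDiff ℝ (⊤ : ℕ∞) fun x => v x μ)
    (hsymm : ∀ x μ ν, h x μ ν = h x ν μ)
    (hcsymm : ∀ x μ ν, hc x μ ν = hc x ν μ)
    (hτh : ∀ x σ, ∑ ρ, τ x ρ * h x ρ σ = 0)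
    (hτv : ∀ x, ∑ ρ, τ x ρ * v x ρ = 1)
    (hcv : ∀ x μ, ∑ ν, hc x μ ν * v x ν = 0)
    (hch : ∀ x μ ν, ∑ κ, hc x μ κ * h x κ ν = (if μ = ν then (1 : ℝ) else 0) - τ x μ * v x ν) :
    ∀ x μ ρ σ, covHup (fun x ρ μ ν => specialGamma τ h hc v x ρ μ ν) h x μ ρ σ = 0 := by
  intro x μ ρ σ
  have dτ : ∀ a, DifferentiableAt ℝ (fun y => τ y a) x :=
    fun a => ((hτsm a).differentiable (by simp)) x
  have dh : ∀ a b, DifferentiableAt ℝ (fun y => h y a b) x :=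
    fun a b => ((hhsm a b).differentiable (by simp)) x
  have dhc : ∀ a b, DifferentiableAt ℝ (fun y => hc y a b) x :=
    fun a b => ((hhcsm a b).differentiable (by simp)) x
  have dv : ∀ a, DifferentiableAt ℝ (fun y => v y a) x :=
    fun a => ((hvsm a).differentiable (by simp)) x
  have hA : ∀ s, (∑ l, pd μ (fun y => τ y l) x * h x l s)
      = -∑ l, τ x l * pd μ (fun y => h y l s) x := by
    intro s
    have h0 : pd μ (fun y => ∑ l, τ y l * h y l s) x = 0 := by
      rw [show (fun y => ∑ l, τ y l * h y l s) = (fun _ => (0:ℝ)) from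
        funext fun y => hτh y s]
      simp [pd]
    rw [pd_of_sum_mul μ (fun l y => τ y l) (fun l y => h y l s) x
      (fun i => dτ i) (fun i => dh i s), Finset.sum_add_distrib] at h0
    linarith
  have hB : ∀ a s, (∑ l, pd μ (fun y => hc y a l) x * h x l s)
      = -(pd μ (fun y => τ y a) x * v x s + τ x a * pd μ (fun y => v y s) x)
        - ∑ l, hc x a l * pd μ (fun y => h y l s) x := by
    intro a s
    have h0 : pd μ (fun y => ∑ k, hc y a k * h y k s) x
        = pd μ (fun y => (if a = s then (1:ℝ) else 0) - τ y a * v y s) x := by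
      congr 1
      funext y
      exact hch y a s
    rw [pd_of_sum_mul μ (fun k y => hc y a k) (fun k y => h y k s) x
      (fun i => dhc a i) (fun i => dh i s),
      pd_const_sub_mul μ _ _ _ x (dτ a) (dv s), Finset.sum_add_distrib] at h0
    linarith
  have DHsymm : ∀ a b, pd μ (fun y => h y a b) x = pd μ (fun y => h y b a) x := by
    intro a b
    congr 1
    funext y
    exact hsymm y a b
  have DHCsymm : ∀ a b, pd μ (fun y => hc y a b) x = pd μ (fun y => hc y b a) x := by
    intro a b
    congr 1
    funext y
    exact hcsymm y a b
  simp only [covHup, specialGamma]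
  exact key_algebra (fun a b => h x a b) (fun a b => hc x a b) (fun a => τ x a)
    (fun a => v x a) (fun a => pd μ (fun y => τ y a) x) (fun a => pd μ (fun y => v y a) x)
    (fun a b => pd μ (fun y => h y a b) x) (fun m a b => pd m (fun y => hc y a b) x) μ ρ σ
    (fun a b => hsymm x a b) (fun a b => hcsymm x a b) DHsymm DHCsymm hA hB
    (fun s => hτh x s) (fun a s => hch x a s)
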